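/- Suppose the similarity ranking satisfies the (α,ν)-good neighborhood property, and let t = n_{C_i} for some cluster C_i. Then any two good points x, y ∈ G_i share at least t − 2(α+ν)n points among their t nearest neighbors: |N_t(x) ∩ N_t(y)| ≥ t − 2(α+ν)n. -/

import Mathlib

open Finset

/-- The `t` nearest neighbors of `x` in the whole point set:
all points whose rank (w.r.t. decreasing similarity to `x`) is below `t`. -/
def nearest {V : Type*} [Fintype V] [DecidableEq V] (r : V → V → ℕ) (x : V) (t : ℕ) :
    Finset V :=
  Finset.univ.filter fun y => r x y < t

/-- The `s` nearest neighbors of `x` within a subset `T`: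
the elements `y ∈ T` such that at most `s` elements of `T` have rank at most that of `y`. -/
def nearestIn {V : Type*} [Fintype V] [DecidableEq V] (r : V → V → ℕ) (x : V)
    (T : Finset V) (s : ℕ) : Finset V :=
  T.filter fun y => (T.filter fun z => r x z ≤ r x y).card ≤ s

/-- `B` witnesses the `(α,ν)`-good neighborhood property for the clustering `C`:
for every `i`, every `x ∈ G_i = C_i \ B` has at most `α·n` of its `|G_i|` nearest
neighbors within `G = S \ B` lying outside `G_i`. -/
def GoodCond {V : Type*} [Fintype V] [DecidableEq V] {k : ℕ} (r : V → V → ℕ)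
    (C : Fin k → Finset V) (α : ℝ) (B : Finset V) : Prop :=
  ∀ i : Fin k, ∀ x ∈ C i \ B,
    (((nearestIn r x (Finset.univ \ B) ((C i \ B).card)) \ (C i \ B)).card : ℝ)
      ≤ α * (Fintype.card V)

lemma card_nearest {V : Type*} [Fintype V] [DecidableEq V] (r : V → V → ℕ) (x : V) (t : ℕ)
    (hrinj : Function.Injective (r x)) (hrlt : ∀ y, r x y < Fintype.card V)
    (ht : t ≤ Fintype.card V) : (nearest r x t).card = t := by
  have himg : Finset.image (r x) Finset.univ = Finset.range (Fintype.card V) := by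
    apply Finset.eq_of_subset_of_card_le
    · intro m hm
      simp only [Finset.mem_image] at hm
      obtain ⟨z, _, rfl⟩ := hm
      simpa using hrlt z
    · rw [Finset.card_range, Finset.card_image_of_injective _ hrinj, Finset.card_univ]
  have h2 : Finset.image (r x) (nearest r x t) = Finset.range t := by
    ext m
    simp only [nearest, Finset.mem_image, Finset.mem_filter, Finset.mem_univ, true_and,
      Finset.mem_range]
    constructor
    · rintro ⟨z, hz, rfl⟩; exact hz
    · intro hm
      have : m ∈ Finset.image (r x) Finset.univ := by
        rw [himg]; exact Finset.mem_range.2 (lt_of_lt_of_le hm ht)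
      obtain ⟨z, _, rfl⟩ := Finset.mem_image.1 this
      exact ⟨z, hm, rfl⟩
  calc (nearest r x t).card = (Finset.image (r x) (nearest r x t)).card :=
        (Finset.card_image_of_injective _ hrinj).symm
    _ = t := by rw [h2, Finset.card_range]

lemma nearestIn_card_eq {V : Type*} [Fintype V] [DecidableEq V] (r : V → V → ℕ) (x : V)
    (T : Finset V) (s : ℕ) (hrinj : Function.Injective (r x)) (hs : s ≤ T.card) :
    (nearestIn r x T s).card = s := by
  set pos : V → ℕ := fun z => (T.filter fun w => r x w ≤ r x z).card with hpos
  have hpos1 : ∀ z ∈ T, 1 ≤ pos z := fun z hz =>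
    Finset.card_pos.2 ⟨z, Finset.mem_filter.2 ⟨hz, le_refl _⟩⟩
  have hposle : ∀ z, pos z ≤ T.card := fun z => Finset.card_filter_le _ _
  have hkey : ∀ z ∈ T, ∀ w ∈ T, r x z ≤ r x w → pos z = pos w → z = w := by
    intro z hz w hw hle heq
    have hss : (T.filter fun u => r x u ≤ r x z) ⊆ (T.filter fun u => r x u ≤ r x w) :=
      by intro u hu
         obtain ⟨h1, h2⟩ := Finset.mem_filter.1 hu
         exact Finset.mem_filter.2 ⟨h1, le_trans h2 hle⟩
    have hEq := Finset.eq_of_subset_of_card_le hss (le_of_eq heq.symm)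
    have hwmem : w ∈ T.filter fun u => r x u ≤ r x z := by
      rw [hEq]; exact Finset.mem_filter.2 ⟨hw, le_refl _⟩
    exact hrinj (le_antisymm hle (Finset.mem_filter.1 hwmem).2)
  have hposinj : Set.InjOn pos ↑T := by
    intro z hz w hw heq
    rcases le_total (r x z) (r x w) with h | h
    · exact hkey z hz w hw h heq
    · exact (hkey w hw z hz h heq.symm).symm
  have himT : Finset.image pos T = Finset.Icc 1 T.card := by
    apply Finset.eq_of_subset_of_card_le
    · intro m hm
      obtain ⟨z, hz, rfl⟩ := Finset.mem_image.1 hm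
      exact Finset.mem_Icc.2 ⟨hpos1 z hz, hposle z⟩
    · rw [Finset.card_image_of_injOn hposinj, Nat.card_Icc]; omega
  have himA : Finset.image pos (nearestIn r x T s) = Finset.Icc 1 s := by
    ext m
    constructor
    · intro hm
      obtain ⟨z, hz, rfl⟩ := Finset.mem_image.1 hm
      obtain ⟨hzT, hzs⟩ := Finset.mem_filter.1 hz
      exact Finset.mem_Icc.2 ⟨hpos1 z hzT, hzs⟩
    · intro hm
      obtain ⟨h1, h2⟩ := Finset.mem_Icc.1 hm
      have : m ∈ Finset.image pos T := by
        rw [himT]; exact Finset.mem_Icc.2 ⟨h1, le_trans h2 hs⟩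
      obtain ⟨z, hz, rfl⟩ := Finset.mem_image.1 this
      exact Finset.mem_image.2 ⟨z, Finset.mem_filter.2 ⟨hz, h2⟩, rfl⟩
  have hAT : (nearestIn r x T s : Set V) ⊆ ↑T := by
    intro z hz
    exact Finset.mem_coe.1 (Finset.filter_subset _ _ (Finset.mem_coe.1 hz))
  rw [← Finset.card_image_of_injOn (hposinj.mono hAT), himA, Nat.card_Icc]
  omega

lemma nearest_sdiff_card_le {V : Type*} [Fintype V] [DecidableEq V] (r : V → V → ℕ) (x : V)
    (B Ci : Finset V) (t : ℕ) (α : ℝ)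
    (hrinj : Function.Injective (r x)) (hrlt : ∀ y, r x y < Fintype.card V)
    (ht : t = Ci.card)
    (hA : (((nearestIn r x (Finset.univ \ B) ((Ci \ B).card)) \ (Ci \ B)).card : ℝ)
      ≤ α * (Fintype.card V)) :
    ((nearest r x t \ (Ci \ B)).card : ℝ) ≤ α * (Fintype.card V) + B.card := by
  set T : Finset V := Finset.univ \ B with hT
  set Gi : Finset V := Ci \ B with hGi
  set s : ℕ := Gi.card with hs
  set A : Finset V := nearestIn r x T s with hAdef
  set N : Finset V := nearest r x t with hN
  set pos : V → ℕ := fun z => (T.filter fun w => r x w ≤ r x z).card with hpos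
  have hmemT : ∀ z : V, z ∈ T ↔ z ∉ B := by
    intro z; rw [hT, Finset.mem_sdiff]; simp
  have hmemN : ∀ z : V, z ∈ N ↔ r x z < t := by
    intro z; rw [hN]; unfold nearest; simp
  have hmemA : ∀ z : V, z ∈ A ↔ z ∈ T ∧ pos z ≤ s := fun z => Finset.mem_filter
  have hposmono : ∀ z w : V, r x z ≤ r x w → pos z ≤ pos w := by
    intro z w h
    apply Finset.card_le_card
    intro u hu
    obtain ⟨h1, h2⟩ := Finset.mem_filter.1 hu
    exact Finset.mem_filter.2 ⟨h1, le_trans h2 h⟩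
  have hcardN : N.card = t :=
    card_nearest r x t hrinj hrlt (ht ▸ (Finset.card_univ (α := V) ▸ Finset.card_le_univ Ci))
  by_cases hc : ∀ z ∈ N ∩ T, z ∈ A
  · -- all good points of N are among the s nearest good points
    have hsub : N \ Gi ⊆ (A \ Gi) ∪ (N ∩ B) := by
      intro z hz
      obtain ⟨hzN, hzG⟩ := Finset.mem_sdiff.1 hz
      by_cases hzB : z ∈ B
      · exact Finset.mem_union_right _ (Finset.mem_inter.2 ⟨hzN, hzB⟩)
      · exact Finset.mem_union_left _ (Finset.mem_sdiff.2
          ⟨hc z (Finset.mem_inter.2 ⟨hzN, (hmemT z).2 hzB⟩), hzG⟩)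
    have h1 : (N \ Gi).card ≤ (A \ Gi).card + (N ∩ B).card :=
      le_trans (Finset.card_le_card hsub) (Finset.card_union_le _ _)
    have h2 : (N ∩ B).card ≤ B.card := Finset.card_le_card Finset.inter_subset_right
    have : ((N \ Gi).card : ℝ) ≤ ((A \ Gi).card : ℝ) + ((N ∩ B).card : ℝ) := by
      exact_mod_cast h1
    have h3 : ((N ∩ B).card : ℝ) ≤ (B.card : ℝ) := by exact_mod_cast h2
    linarith
  · push_neg at hc
    obtain ⟨w, hwNT, hwA⟩ := hc
    obtain ⟨hwN, hwT⟩ := Finset.mem_inter.1 hwNT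
    have hw_pos : s < pos w := by
      by_contra h
      exact hwA ((hmemA w).2 ⟨hwT, not_lt.1 h⟩)
    have hAsub : A ⊆ N ∩ T := by
      intro z hz
      obtain ⟨hzT, hzs⟩ := (hmemA z).1 hz
      have hzw : r x z < r x w := by
        by_contra h
        exact absurd (le_trans (hposmono w z (not_lt.1 h)) hzs) (not_le.2 hw_pos)
      exact Finset.mem_inter.2 ⟨(hmemN z).2 (lt_trans hzw ((hmemN w).1 hwN)), hzT⟩
    have hsT : s ≤ T.card := le_trans (le_of_lt hw_pos) (Finset.card_filter_le _ _)
    have hAcard : A.card = s := nearestIn_card_eq r x T s hrinj hsT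
    -- counting
    have e1 : ((N ∩ T) \ A).card + A.card = (N ∩ T).card :=
      Finset.card_sdiff_add_card_eq_card hAsub
    have e3 : N ∩ T = N \ B := by
      ext z
      simp only [Finset.mem_inter, Finset.mem_sdiff, hmemT z]
    have e2 : (N ∩ B).card + (N \ B).card = N.card := Finset.card_inter_add_card_sdiff N B
    have e4 : (Ci ∩ B).card + Gi.card = Ci.card := Finset.card_inter_add_card_sdiff Ci B
    have e5 : (Ci ∩ B).card ≤ B.card := Finset.card_le_card Finset.inter_subset_right
    have K : ((N ∩ T) \ A).card + (N ∩ B).card ≤ B.card := by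
      rw [hAcard] at e1
      have q1 : (N ∩ T).card = (N \ B).card := by rw [e3]
      have q2 : (N ∩ B).card + (N \ B).card = t := by rw [← hcardN]; exact e2
      have q3 : (Ci ∩ B).card + s = t := by rw [ht]; exact e4
      omega
    have hsub : N \ Gi ⊆ (A \ Gi) ∪ (((N ∩ T) \ A) ∪ (N ∩ B)) := by
      intro z hz
      obtain ⟨hzN, hzG⟩ := Finset.mem_sdiff.1 hz
      by_cases hzB : z ∈ B
      · exact Finset.mem_union_right _ (Finset.mem_union_right _
          (Finset.mem_inter.2 ⟨hzN, hzB⟩))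
      · by_cases hzA : z ∈ A
        · exact Finset.mem_union_left _ (Finset.mem_sdiff.2 ⟨hzA, hzG⟩)
        · exact Finset.mem_union_right _ (Finset.mem_union_left _ (Finset.mem_sdiff.2
            ⟨Finset.mem_inter.2 ⟨hzN, (hmemT z).2 hzB⟩, hzA⟩))
    have h1 : (N \ Gi).card ≤ (A \ Gi).card + (((N ∩ T) \ A).card + (N ∩ B).card) :=
      le_trans (Finset.card_le_card hsub)
        (le_trans (Finset.card_union_le _ _)
          (Nat.add_le_add_left (Finset.card_union_le _ _) _))
    have h2 : ((N \ Gi).card : ℝ)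
        ≤ ((A \ Gi).card : ℝ) + ((((N ∩ T) \ A).card + (N ∩ B).card : ℕ) : ℝ) := by
      exact_mod_cast h1
    have h3 : ((((N ∩ T) \ A).card + (N ∩ B).card : ℕ) : ℝ) ≤ (B.card : ℝ) := by
      exact_mod_cast K
    linarith

theorem good_points_same_cluster_share_neighbors
    {V : Type*} [Fintype V] [DecidableEq V] {k : ℕ}
    (r : V → V → ℕ) (C : Fin k → Finset V) (α ν : ℝ) (B : Finset V)
    (hn : 0 < Fintype.card V)
    (hα : 0 ≤ α) (hν : 0 ≤ ν)
    (hrinj : ∀ x : V, Function.Injective (r x))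
    (hrlt : ∀ x y : V, r x y < Fintype.card V)
    (hdis : ∀ i j : Fin k, i ≠ j → Disjoint (C i) (C j))
    (hcov : ∀ x : V, ∃ i : Fin k, x ∈ C i)
    (hB : (B.card : ℝ) ≤ ν * (Fintype.card V))
    (hgood : GoodCond r C α B)
    (i : Fin k) (t : ℕ) (ht : t = (C i).card)
    (x : V) (hx : x ∈ C i \ B) (y : V) (hy : y ∈ C i \ B) :
    (t : ℝ) - 2 * (α + ν) * (Fintype.card V)
        ≤ (((nearest r x t) ∩ (nearest r y t)).card : ℝ) := by
  have hn' : ((C i).card : ℕ) = (C i).card := rfl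
  set n := Fintype.card V
  set Gi : Finset V := C i \ B with hGidef
  set Nx : Finset V := nearest r x t with hNx
  set Ny : Finset V := nearest r y t with hNy
  have htn : t ≤ n := by
    rw [ht]
    exact le_trans (Finset.card_le_univ (C i)) (le_of_eq Finset.card_univ)
  have hx' : ((Nx \ Gi).card : ℝ) ≤ α * n + B.card :=
    nearest_sdiff_card_le r x B (C i) t α (hrinj x) (hrlt x) ht (hgood i x hx)
  have hy' : ((Ny \ Gi).card : ℝ) ≤ α * n + B.card :=
    nearest_sdiff_card_le r y B (C i) t α (hrinj y) (hrlt y) ht (hgood i y hy)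
  have hcx : Nx.card = t := card_nearest r x t (hrinj x) (hrlt x) htn
  have hcy : Ny.card = t := card_nearest r y t (hrinj y) (hrlt y) htn
  have hcover : Gi ⊆ (Nx ∩ Ny) ∪ ((Gi \ Nx) ∪ (Gi \ Ny)) := by
    intro z hz
    by_cases h1 : z ∈ Nx
    · by_cases h2 : z ∈ Ny
      · exact Finset.mem_union_left _ (Finset.mem_inter.2 ⟨h1, h2⟩)
      · exact Finset.mem_union_right _ (Finset.mem_union_right _ (Finset.mem_sdiff.2 ⟨hz, h2⟩))
    · exact Finset.mem_union_right _ (Finset.mem_union_left _ (Finset.mem_sdiff.2 ⟨hz, h1⟩))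
  have n1 : Gi.card ≤ (Nx ∩ Ny).card + ((Gi \ Nx).card + (Gi \ Ny).card) :=
    le_trans (Finset.card_le_card hcover)
      (le_trans (Finset.card_union_le _ _)
        (Nat.add_le_add_left (Finset.card_union_le _ _) _))
  have n2x : (Gi ∩ Nx).card + (Gi \ Nx).card = Gi.card := Finset.card_inter_add_card_sdiff Gi Nx
  have n2y : (Gi ∩ Ny).card + (Gi \ Ny).card = Gi.card := Finset.card_inter_add_card_sdiff Gi Ny
  have n3x : (Nx ∩ Gi).card + (Nx \ Gi).card = t := by
    rw [← hcx]; exact Finset.card_inter_add_card_sdiff Nx Gi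
  have n3y : (Ny ∩ Gi).card + (Ny \ Gi).card = t := by
    rw [← hcy]; exact Finset.card_inter_add_card_sdiff Ny Gi
  have n4x : (Gi ∩ Nx).card = (Nx ∩ Gi).card := by rw [Finset.inter_comm]
  have n4y : (Gi ∩ Ny).card = (Ny ∩ Gi).card := by rw [Finset.inter_comm]
  have n5 : Gi.card ≤ t := ht ▸ Finset.card_le_card Finset.sdiff_subset
  have key : t ≤ (Nx ∩ Ny).card + ((Nx \ Gi).card + (Ny \ Gi).card) := by omega
  have keyR : (t : ℝ) ≤ ((Nx ∩ Ny).card : ℝ) + (((Nx \ Gi).card : ℝ) + ((Ny \ Gi).card : ℝ)) := by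
    exact_mod_cast key
  linarith
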